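/- Let θ > 1 be real, let n be a positive integer with n > log θ / log 2, and let x = M_θ(n). Then (x + 1/2 − 1/x)·log θ ≤ n < (x + 3/2)·log θ. -/

import Mathlib

open Real

/-- `M θ n = ⌊1 / {θ^(1/n)}⌋`, the integer part of the reciprocal of the
fractional part of the `n`-th root of `θ`. -/
noncomputable def M (θ : ℝ) (n : ℕ) : ℤ := ⌊1 / Int.fract (θ ^ ((n : ℝ)⁻¹))⌋

/-- `g x = 1 / log (1 + 1/x)`. -/
noncomputable def g (x : ℝ) : ℝ := 1 / Real.log (1 + 1 / x)

lemma aux1 {u : ℝ} (hu : 0 < u) (hu1 : u ≤ 1) :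
    1 + u ≤ Real.exp (u / (1 + u / 2 - u ^ 2)) := by
  have hD : (0:ℝ) < 1 + u / 2 - u ^ 2 := by nlinarith
  set c := u / (1 + u / 2 - u ^ 2) with hc
  have hcD : c * (1 + u / 2 - u ^ 2) = u := div_mul_cancel₀ _ hD.ne'
  have hc0 : 0 < c := div_pos hu hD
  have hsum := Real.sum_le_exp_of_nonneg hc0.le 4
  have hs : ∑ i ∈ Finset.range 4, c ^ i / (Nat.factorial i) =
      1 + c + c ^ 2 / 2 + c ^ 3 / 6 := by
    simp [Finset.sum_range_succ, Nat.factorial]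
  rw [hs] at hsum
  nlinarith [sq_nonneg c, sq_nonneg (c*u), mul_pos hc0 hu, sq_nonneg u,
    mul_pos (mul_pos hc0 hu) hu, mul_pos hc0 hc0]

lemma aux2 {v : ℝ} (hv : 0 < v) (hv1 : v ≤ 1/2) :
    Real.exp (2 * v / (2 + v)) < 1 + v := by
  have h2v : (0:ℝ) < 2 + v := by linarith
  set c := 2 * v / (2 + v) with hc
  have hcD : c * (2 + v) = 2 * v := div_mul_cancel₀ _ h2v.ne'
  have hc0 : 0 < c := div_pos (by linarith) h2v
  have hc1 : c ≤ 2/5 := by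
    rw [hc, div_le_iff₀ h2v]; nlinarith
  have hb := Real.exp_bound' hc0.le (by linarith) (n := 4) (by norm_num)
  norm_num [Finset.sum_range_succ, Nat.factorial] at hb
  have key : 1 + c + c ^ 2 / 2 + c ^ 3 / 6 + 5 * c ^ 4 / 96 < 1 + v := by
    nlinarith [sq_nonneg c, mul_pos hc0 hv, mul_pos hc0 hc0,
      mul_pos (mul_pos hc0 hc0) hc0, mul_pos hv hv]
  linarith

theorem stmt_10 (θ : ℝ) (hθ : 1 < θ) (n : ℕ) (hn : 0 < n)
    (hlog : (n : ℝ) > Real.log θ / Real.log 2) (x : ℤ) (hx : x = M θ n) :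
    ((x : ℝ) + 1 / 2 - 1 / (x : ℝ)) * Real.log θ ≤ (n : ℝ) ∧
    (n : ℝ) < ((x : ℝ) + 3 / 2) * Real.log θ := by
  have hθ0 : (0:ℝ) < θ := by linarith
  have hn0 : (0:ℝ) < n := by exact_mod_cast hn
  set t : ℝ := θ ^ ((n : ℝ)⁻¹) with ht
  have hlogt : Real.log t = (n : ℝ)⁻¹ * Real.log θ := Real.log_rpow hθ0 _
  have hlogθ : Real.log θ = n * Real.log t := by
    rw [hlogt]; field_simp
  have ht1 : 1 < t :=
    (Real.one_lt_rpow_iff_of_pos hθ0).2 (Or.inl ⟨hθ, inv_pos.2 hn0⟩)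
  have ht0 : 0 < t := lt_trans one_pos ht1
  -- t < 2
  have hlog2 : (0:ℝ) < Real.log 2 := Real.log_pos (by norm_num)
  have ht2 : t < 2 := by
    rw [← Real.log_lt_log_iff ht0 (by norm_num), hlogt]
    have h1 : Real.log θ < n * Real.log 2 := (div_lt_iff₀ hlog2).1 hlog
    have h2 : (n:ℝ)⁻¹ * (n * Real.log 2) = Real.log 2 := by field_simp
    nlinarith [mul_lt_mul_of_pos_left h1 (inv_pos.2 hn0)]
  -- fract t = t - 1
  have hfl : ⌊t⌋ = 1 := by
    rw [Int.floor_eq_iff]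
    constructor <;> push_cast <;> linarith
  have hfract : Int.fract t = t - 1 := by
    rw [Int.fract, hfl]; norm_num
  have hx' : x = ⌊1 / (t - 1)⌋ := by rw [hx, M, ← ht, hfract]
  have htm : 0 < t - 1 := by linarith
  have hinv1 : 1 < 1 / (t - 1) := by
    rw [lt_div_iff₀ htm]; linarith
  have hx1 : 1 ≤ x := by
    rw [hx']; exact Int.le_floor.2 (by exact_mod_cast hinv1.le)
  have hxR : (1:ℝ) ≤ (x:ℝ) := by exact_mod_cast hx1
  have hxR0 : (0:ℝ) < (x:ℝ) := by linarith
  -- x ≤ 1/(t-1) < x + 1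
  have hle : (x:ℝ) ≤ 1 / (t - 1) := by rw [hx']; exact Int.floor_le _
  have hlt : 1 / (t - 1) < (x:ℝ) + 1 := by
    rw [hx']; exact Int.lt_floor_add_one _
  -- hence t ≤ 1 + 1/x and 1 + 1/(x+1) < t
  have htub : t ≤ 1 + 1 / (x:ℝ) := by
    rw [le_div_iff₀ htm] at hle
    have h1 : t - 1 ≤ 1 / (x:ℝ) := by
      rw [le_div_iff₀ hxR0]; nlinarith
    linarith
  have htlb : 1 + 1 / ((x:ℝ) + 1) < t := by
    rw [div_lt_iff₀ htm] at hlt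
    have h1 : 1 / ((x:ℝ) + 1) < t - 1 := by
      rw [div_lt_iff₀ (by linarith : (0:ℝ) < (x:ℝ) + 1)]; nlinarith
    linarith
  constructor
  · -- upper bound side: (x + 1/2 - 1/x) * log θ ≤ n
    -- suffices (x + 1/2 - 1/x) * log t ≤ 1
    have hu : (0:ℝ) < 1 / (x:ℝ) := by positivity
    have hu1 : 1 / (x:ℝ) ≤ 1 := by rw [div_le_one hxR0]; linarith
    set u : ℝ := 1 / (x:ℝ) with hudef
    have hD : (0:ℝ) < 1 + u / 2 - u ^ 2 := by nlinarith
    have hA : ((x:ℝ) + 1 / 2 - 1 / (x:ℝ)) * u = 1 + u / 2 - u ^ 2 := by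
      rw [hudef]; field_simp
    have hexp := aux1 hu hu1
    have hlt' : Real.log t ≤ u / (1 + u / 2 - u ^ 2) := by
      rw [Real.log_le_iff_le_exp ht0]
      exact le_trans (le_trans htub (by rw [hudef])) hexp
    have hApos : (0:ℝ) ≤ (x:ℝ) + 1 / 2 - 1 / (x:ℝ) := by
      have : 1 / (x:ℝ) ≤ 1 := hu1
      linarith
    have hkey : ((x:ℝ) + 1 / 2 - 1 / (x:ℝ)) * Real.log t ≤ 1 := by
      calc ((x:ℝ) + 1 / 2 - 1 / (x:ℝ)) * Real.log t
          ≤ ((x:ℝ) + 1 / 2 - 1 / (x:ℝ)) * (u / (1 + u / 2 - u ^ 2)) :=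
            mul_le_mul_of_nonneg_left hlt' hApos
        _ = (((x:ℝ) + 1 / 2 - 1 / (x:ℝ)) * u) / (1 + u / 2 - u ^ 2) :=
            (mul_div_assoc _ _ _).symm
        _ = 1 := by rw [hA, div_self hD.ne']
    rw [hlogθ]
    calc ((x:ℝ) + 1 / 2 - 1 / (x:ℝ)) * (n * Real.log t)
        = n * (((x:ℝ) + 1 / 2 - 1 / (x:ℝ)) * Real.log t) := by ring
      _ ≤ n * 1 := by apply mul_le_mul_of_nonneg_left hkey hn0.le
      _ = n := by ring
  · -- lower bound side: n < (x + 3/2) * log θ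
    have hv : (0:ℝ) < 1 / ((x:ℝ) + 1) := by positivity
    have hv1 : 1 / ((x:ℝ) + 1) ≤ 1/2 := by
      rw [div_le_div_iff₀ (by linarith) (by norm_num)]; linarith
    set v : ℝ := 1 / ((x:ℝ) + 1) with hvdef
    have hexp := aux2 hv hv1
    have hcv : 2 * v / (2 + v) = 1 / ((x:ℝ) + 3 / 2) := by
      rw [hvdef]
      rw [div_eq_div_iff (by positivity) (by positivity)]
      field_simp
      ring
    have hlt' : 1 / ((x:ℝ) + 3 / 2) < Real.log t := by
      rw [← hcv, Real.lt_log_iff_exp_lt ht0]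
      exact lt_trans hexp htlb
    have hkey : 1 < ((x:ℝ) + 3 / 2) * Real.log t := by
      have h32 : (0:ℝ) < (x:ℝ) + 3 / 2 := by linarith
      have h := (div_lt_iff₀ h32).1 hlt'
      calc (1:ℝ) < Real.log t * ((x:ℝ) + 3 / 2) := h
        _ = ((x:ℝ) + 3 / 2) * Real.log t := mul_comm _ _
    rw [hlogθ]
    calc (n:ℝ) = n * 1 := by ring
      _ < n * (((x:ℝ) + 3 / 2) * Real.log t) := by
          apply mul_lt_mul_of_pos_left hkey hn0
      _ = ((x:ℝ) + 3 / 2) * (n * Real.log t) := by ring
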